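/- If f : Ω₁ → ℝ is N-local, then the function Lf(η) = Σ_{i∈ℤ} [f(T_i η) − f(η)] is a well-defined (finite sum) (N+1)-local function on Ω₁. -/
import Mathlib


open Filter

noncomputable section

attribute [local instance] Classical.propDecidable

/-- A configuration of the one-dimensional sandpile: heights in `{1,2}`. -/
def IsConfig (η : ℤ → ℤ) : Prop := ∀ x, η x = 1 ∨ η x = 2

/-- The indicator function of site `i`. -/
def e (i : ℤ) : ℤ → ℤ := fun x => if x = i then 1 else 0

/-- `Kp i η = {j ≥ 0 : η (i+j) = 1}`. -/
def Kp (i : ℤ) (η : ℤ → ℤ) : Set ℕ := {j : ℕ | η (i + (j : ℤ)) = 1}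

/-- `Km i η = {j > 0 : η (i−j) = 1}`. -/
def Km (i : ℤ) (η : ℤ → ℤ) : Set ℕ := {j : ℕ | 0 < j ∧ η (i - (j : ℤ)) = 1}

/-- `k⁺(i,η)`, meaningful when `Kp i η` is nonempty (i.e. `k⁺(i,η) < ∞`). -/
noncomputable def kplus (i : ℤ) (η : ℤ → ℤ) : ℕ := sInf (Kp i η)

/-- `k⁻(i,η)`, meaningful when `Km i η` is nonempty (i.e. `k⁻(i,η) < ∞`). -/
noncomputable def kminus (i : ℤ) (η : ℤ → ℤ) : ℕ := sInf (Km i η)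

/-- The toppling transformation `T i`, by the five cases of the paper. -/
noncomputable def T (i : ℤ) (η : ℤ → ℤ) : ℤ → ℤ :=
  if η i = 1 then η + e i
  else if (Kp i η).Nonempty then
    if (Km i η).Nonempty then
      η + e (i + (kplus i η : ℤ)) + e (i - (kminus i η : ℤ))
        - e (i + (kplus i η : ℤ) - (kminus i η : ℤ))
    else η + e (i + (kplus i η : ℤ))
  else if (Km i η).Nonempty then η + e (i - (kminus i η : ℤ))
  else η

/-- `Ω₁`: configurations with infinitely many ones to the left and to the right of the
origin. -/
def Omega1 (η : ℤ → ℤ) : Prop :=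
  IsConfig η ∧ {i : ℤ | i < 0 ∧ η i = 1}.Infinite ∧ {i : ℤ | 0 < i ∧ η i = 1}.Infinite

/-- `X : ℤ → ℤ` is the increasing enumeration of `η⁻¹({1})` normalized so that
`X 0 = min {i ≥ 0 : η i = 1}`. -/
def IsEnum (η : ℤ → ℤ) (X : ℤ → ℤ) : Prop :=
  StrictMono X ∧ (∀ i, η (X i) = 1) ∧ (∀ j, η j = 1 → ∃ i, X i = j) ∧
    0 ≤ X 0 ∧ ∀ j, 0 ≤ j → η j = 1 → X 0 ≤ j

/-- A function `f` on configurations is `N`-local if `f η` depends only on the values of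
`η` on `⋃_{j=-N}^{N} I_j(η)`, where `I_j(η) = (X_{j-1}(η), X_j(η)]`.  Since on each
interval `I_j` a configuration equals `2` except for the value `1` at the right endpoint
`X_j`, this is equivalent to saying that `f η` depends only on
`(X_{-N-1}(η), …, X_N(η))`. -/
def IsNLocal (N : ℕ) (f : (ℤ → ℤ) → ℝ) : Prop :=
  ∀ η ζ Xη Xζ, Omega1 η → Omega1 ζ → IsEnum η Xη → IsEnum ζ Xζ →
    (∀ j : ℤ, -(N : ℤ) - 1 ≤ j → j ≤ (N : ℤ) → Xη j = Xζ j) → f η = f ζ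

/-- The formal generator `L f (η) = Σ_{i ∈ ℤ} [f (T_i η) − f η]` (as a `tsum`). -/
noncomputable def Lgen (f : (ℤ → ℤ) → ℝ) : (ℤ → ℤ) → ℝ :=
  fun η => ∑' i : ℤ, (f (T i η) - f η)

namespace SandAux

variable {η ζ X : ℤ → ℤ}

lemma X_lt_zero (hX : IsEnum η X) {m : ℤ} (hm : m < 0) : X m < 0 := by
  by_contra h
  push_neg at h
  have h1 : X 0 ≤ X m := hX.2.2.2.2 _ h (hX.2.1 m)
  have h2 : X m < X 0 := hX.1 hm
  omega

lemma X_nonneg (hX : IsEnum η X) {m : ℤ} (hm : 0 ≤ m) : 0 ≤ X m := by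
  have := hX.1.monotone hm
  have := hX.2.2.2.1
  omega

lemma sm_bd (hX : StrictMono X) : ∀ m : ℤ, X 0 + m ≤ X m ∨ m ≤ 0 := by
  have h : Monotone (fun m : ℤ => X m - m) :=
    monotone_int_of_le_succ (fun n => by have := hX (lt_add_one n); simp; omega)
  intro m
  rcases le_or_gt m 0 with h' | h'
  · exact Or.inr h'
  · have := h h'.le
    simp at this; omega

lemma sm_bd' (hX : StrictMono X) : ∀ m : ℤ, X m ≤ X 0 + m ∨ 0 ≤ m := by
  have h : Monotone (fun m : ℤ => X m - m) :=
    monotone_int_of_le_succ (fun n => by have := hX (lt_add_one n); simp; omega)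
  intro m
  rcases le_or_gt 0 m with h' | h'
  · exact Or.inr h'
  · have := h h'.le
    simp at this; omega

lemma exists_kk (hX : IsEnum η X) (i : ℤ) : ∃ k, X (k - 1) < i ∧ i ≤ X k := by
  have hbdd : ∃ b : ℤ, ∀ z : ℤ, i ≤ X z → b ≤ z := by
    refine ⟨min 0 (i - X 0), fun z hz => ?_⟩
    rcases sm_bd' hX.1 z with h | h <;> omega
  have hinh : ∃ z : ℤ, i ≤ X z := by
    rcases le_or_gt i (X 0) with h | h
    · exact ⟨0, h⟩
    · refine ⟨i - X 0, ?_⟩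
      rcases sm_bd hX.1 (i - X 0) with h' | h' <;> omega
  obtain ⟨lb, hlb, hleast⟩ := Int.exists_least_of_bdd hbdd hinh
  refine ⟨lb, ?_, hlb⟩
  by_contra h
  push_neg at h
  have := hleast _ h
  omega

noncomputable def kk (X : ℤ → ℤ) (i : ℤ) : ℤ :=
  if h : ∃ k, X (k - 1) < i ∧ i ≤ X k then h.choose else 0

lemma kk_spec (hX : IsEnum η X) (i : ℤ) : X (kk X i - 1) < i ∧ i ≤ X (kk X i) := by
  have h := exists_kk hX i
  rw [kk, dif_pos h]
  exact h.choose_spec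

lemma kk_unique (hX : StrictMono X) {i k : ℤ} (h1 : X (k - 1) < i) (h2 : i ≤ X k) :
    kk X i = k := by
  have hex : ∃ k, X (k - 1) < i ∧ i ≤ X k := ⟨k, h1, h2⟩
  rw [kk, dif_pos hex]
  obtain ⟨h1', h2'⟩ := hex.choose_spec
  set k' := hex.choose
  have a1 : k' - 1 < k := hX.lt_iff_lt.mp (lt_of_lt_of_le h1' h2)
  have a2 : k - 1 < k' := hX.lt_iff_lt.mp (lt_of_lt_of_le h1 h2')
  omega

lemma eq_X_kk (hX : IsEnum η X) {i : ℤ} (h1 : η i = 1) : X (kk X i) = i := by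
  obtain ⟨m, hm⟩ := hX.2.2.1 i h1
  obtain ⟨hs1, hs2⟩ := kk_spec hX i
  have a1 : kk X i - 1 < m := hX.1.lt_iff_lt.mp (by omega)
  have a2 : m ≤ kk X i := hX.1.le_iff_le.mp (by omega)
  have : m = kk X i := by omega
  subst this
  exact hm

lemma enum_of (ξ Y : ℤ → ℤ) (hsm : StrictMono Y)
    (h1 : ∀ m, ξ (Y m) = 1) (h2 : ∀ j, ξ j = 1 → ∃ m, Y m = j)
    (h0 : 0 ≤ Y 0) (hm2 : Y (-2) < 0) :
    IsEnum ξ (fun m => Y (m + (if 0 ≤ Y (-1) then -1 else 0))) := by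
  set c : ℤ := if 0 ≤ Y (-1) then -1 else 0 with hc
  have hcY : 0 ≤ Y c := by
    rw [hc]; split_ifs with h
    · exact h
    · exact h0
  have hcm : ∀ m, 0 ≤ Y m → c ≤ m := by
    intro m hm
    rw [hc]; split_ifs with h
    · have : -2 < m := hsm.lt_iff_lt.mp (by omega)
      omega
    · push_neg at h
      have : -1 < m := hsm.lt_iff_lt.mp (by omega)
      omega
  refine ⟨fun a b hab => hsm (by omega), fun m => h1 _, fun j hj => ?_, ?_, ?_⟩
  · obtain ⟨m, hm⟩ := h2 j hj
    exact ⟨m - c, by simpa using hm⟩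
  · simpa using hcY
  · intro j hj hj1
    obtain ⟨m, hm⟩ := h2 j hj1
    have : c ≤ m := hcm m (by omega)
    have := hsm.le_iff_le.mpr (show 0 + c ≤ m by omega)
    simp only []
    omega

lemma omega1_of (hη : Omega1 η) (ξ : ℤ → ℤ) (hcfg : IsConfig ξ) (s : Set ℤ) (hs : s.Finite)
    (hsub : ∀ x, η x = 1 → x ∉ s → ξ x = 1) : Omega1 ξ := by
  refine ⟨hcfg, ?_, ?_⟩
  · refine Set.Infinite.mono ?_ (hη.2.1.diff hs)
    rintro x ⟨⟨hx1, hx2⟩, hx3⟩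
    exact ⟨hx1, hsub x hx2 hx3⟩
  · refine Set.Infinite.mono ?_ (hη.2.2.diff hs)
    rintro x ⟨⟨hx1, hx2⟩, hx3⟩
    exact ⟨hx1, hsub x hx2 hx3⟩

noncomputable def Y1 (X : ℤ → ℤ) (k : ℤ) : ℤ → ℤ := fun m => if m < k then X m else X (m + 1)

noncomputable def X1 (X : ℤ → ℤ) (k : ℤ) : ℤ → ℤ :=
  fun m => Y1 X k (m + (if 0 ≤ Y1 X k (-1) then -1 else 0))

lemma caseOne (hη : Omega1 η) (hX : IsEnum η X) {i : ℤ} (h1 : η i = 1) :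
    Omega1 (T i η) ∧ IsEnum (T i η) (X1 X (kk X i)) := by
  set k := kk X i with hk
  have hik : X k = i := eq_X_kk hX h1
  have hT : T i η = η + e i := by simp only [T, if_pos h1]
  have hval : ∀ x, T i η x = if x = i then 2 else η x := by
    intro x
    rw [hT]
    simp only [Pi.add_apply, e]
    split_ifs with h
    · subst h; omega
    · omega
  have hchar : ∀ x, (T i η x = 1 ↔ (η x = 1 ∧ x ≠ i)) := by
    intro x
    rw [hval x]
    split_ifs with h
    · subst h; simp [h1]
    · simp [h]
  have hcfg : IsConfig (T i η) := by
    intro x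
    rw [hval x]
    split_ifs with h
    · right; rfl
    · exact hη.1 x
  have hΩ : Omega1 (T i η) :=
    omega1_of hη _ hcfg {i} (Set.finite_singleton i)
      (fun x hx hxs => (hchar x).mpr ⟨hx, by simpa using hxs⟩)
  have hY : StrictMono (Y1 X k) := by
    apply strictMono_int_of_lt_succ
    intro n
    simp only [Y1]
    split_ifs <;> exact hX.1 (by omega)
  have hones : ∀ m, T i η (Y1 X k m) = 1 := by
    intro m
    apply (hchar _).mpr
    simp only [Y1]
    split_ifs with h
    · exact ⟨hX.2.1 m, by rw [← hik]; exact hX.1.injective.ne (by omega)⟩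
    · exact ⟨hX.2.1 (m + 1), by rw [← hik]; exact hX.1.injective.ne (by omega)⟩
  have hcov : ∀ j, T i η j = 1 → ∃ m, Y1 X k m = j := by
    intro j hj
    obtain ⟨hj1, hj2⟩ := (hchar j).mp hj
    obtain ⟨m, hm⟩ := hX.2.2.1 j hj1
    have hmk : m ≠ k := fun hc => hj2 (by rw [← hm, hc, hik])
    rcases lt_or_gt_of_ne hmk with h | h
    · exact ⟨m, by simp only [Y1]; rw [if_pos h]; exact hm⟩
    · refine ⟨m - 1, ?_⟩
      simp only [Y1]
      rw [if_neg (show ¬ m - 1 < k by omega), show m - 1 + 1 = m by omega]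
      exact hm
  have h0 : 0 ≤ Y1 X k 0 := by
    simp only [Y1]
    split_ifs with h
    · exact hX.2.2.2.1
    · exact X_nonneg hX (by omega)
  have hm2 : Y1 X k (-2) < 0 := by
    simp only [Y1]
    split_ifs with h
    · exact X_lt_zero hX (by omega)
    · exact X_lt_zero hX (by omega)
  exact ⟨hΩ, enum_of _ _ hY hones hcov h0 hm2⟩

noncomputable def Y2 (X : ℤ → ℤ) (k i : ℤ) : ℤ → ℤ :=
  fun m => if m < k - 1 then X m else if m = k - 1 then X (k - 1) + X k - i else X (m + 1)

noncomputable def X2 (X : ℤ → ℤ) (k i : ℤ) : ℤ → ℤ :=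
  fun m => Y2 X k i (m + (if 0 ≤ Y2 X k i (-1) then -1 else 0))

lemma caseTwo (hη : Omega1 η) (hX : IsEnum η X) {i : ℤ} (h2 : η i ≠ 1) :
    Omega1 (T i η) ∧ IsEnum (T i η) (X2 X (kk X i) i) := by
  set k := kk X i with hk
  obtain ⟨hs1, hs2⟩ := kk_spec hX i
  rw [← hk] at hs1 hs2
  have hi2 : η i = 2 := (hη.1 i).resolve_left h2
  have hilt : i < X k := lt_of_le_of_ne hs2 (fun hc => h2 (hc ▸ hX.2.1 k))
  set p := X (k - 1) + X k - i with hp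
  have hplt1 : X (k - 1) < p := by omega
  have hplt2 : p < X k := by omega
  have hbetw : ∀ x, X (k - 1) < x → x < X k → η x ≠ 1 := by
    intro x hx1 hx2 hx
    obtain ⟨m, hm⟩ := hX.2.2.1 x hx
    have a1 : k - 1 < m := hX.1.lt_iff_lt.mp (by omega)
    have a2 : m < k := hX.1.lt_iff_lt.mp (by omega)
    omega
  have hp2 : η p = 2 := (hη.1 p).resolve_left (hbetw p hplt1 hplt2)
  have hKp : (X k - i).toNat ∈ Kp i η := by
    show η (i + ((X k - i).toNat : ℤ)) = 1
    rw [show i + ((X k - i).toNat : ℤ) = X k by omega]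
    exact hX.2.1 k
  have hkp : kplus i η = (X k - i).toNat := by
    refine le_antisymm (Nat.sInf_le hKp) (le_csInf ⟨_, hKp⟩ ?_)
    intro j hj
    have hj' : η (i + (j : ℤ)) = 1 := hj
    obtain ⟨m, hm⟩ := hX.2.2.1 _ hj'
    have h1m : X (k - 1) < X m := by omega
    have h2m : X k ≤ X m := hX.1.le_iff_le.mpr (show k ≤ m by
      have := hX.1.lt_iff_lt.mp h1m; omega)
    omega
  have hKm : (i - X (k - 1)).toNat ∈ Km i η := by
    refine ⟨by omega, ?_⟩
    rw [show i - ((i - X (k - 1)).toNat : ℤ) = X (k - 1) by omega]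
    exact hX.2.1 (k - 1)
  have hkm : kminus i η = (i - X (k - 1)).toNat := by
    refine le_antisymm (Nat.sInf_le hKm) (le_csInf ⟨_, hKm⟩ ?_)
    rintro j ⟨hj0, hj⟩
    obtain ⟨m, hm⟩ := hX.2.2.1 _ hj
    have hmk : m < k := by
      by_contra hc
      push_neg at hc
      have := hX.1.le_iff_le.mpr hc
      omega
    have : X m ≤ X (k - 1) := hX.1.le_iff_le.mpr (show m ≤ k - 1 by omega)
    omega
  have hT : T i η = η + e (X k) + e (X (k - 1)) - e p := by
    rw [T, if_neg h2]
    split_ifs with hA hB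
    · rw [hkp, hkm,
        show i + ((X k - i).toNat : ℤ) = X k by omega,
        show i - ((i - X (k - 1)).toNat : ℤ) = X (k - 1) by omega,
        show X k - ((i - X (k - 1)).toNat : ℤ) = p by omega]
    · exact absurd ⟨_, hKm⟩ hB
    · exact absurd ⟨_, hKp⟩ hA
    · exact absurd ⟨_, hKp⟩ hA
  have hval : ∀ x, T i η x =
      if x = p then 1 else if x = X k then 2 else if x = X (k - 1) then 2 else η x := by
    intro x
    have h1k := hX.2.1 k
    have h1k' := hX.2.1 (k - 1)
    rw [hT]
    simp only [Pi.add_apply, Pi.sub_apply, e]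
    rcases eq_or_ne x p with rfl | hxp
    · split_ifs <;> omega
    · rcases eq_or_ne x (X k) with rfl | hxk
      · split_ifs <;> omega
      · rcases eq_or_ne x (X (k - 1)) with rfl | hxk'
        · split_ifs <;> omega
        · split_ifs <;> omega
  have hcfg : IsConfig (T i η) := by
    intro x
    rw [hval x]
    split_ifs
    · left; rfl
    · right; rfl
    · right; rfl
    · exact hη.1 x
  have hchar : ∀ x, (T i η x = 1 ↔ ((η x = 1 ∧ x ≠ X (k - 1) ∧ x ≠ X k) ∨ x = p)) := by
    intro x
    have h1k := hX.2.1 k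
    have h1k' := hX.2.1 (k - 1)
    rw [hval x]
    rcases eq_or_ne x p with rfl | hxp
    · simp
    · rcases eq_or_ne x (X k) with rfl | hxk
      · simp [hxp]
      · rcases eq_or_ne x (X (k - 1)) with rfl | hxk'
        · rw [if_neg hxp, if_neg hxk]
          simp [hxp]
        · rw [if_neg hxp, if_neg hxk, if_neg hxk']
          simp [hxp, hxk, hxk']
  have hΩ : Omega1 (T i η) := by
    refine omega1_of hη _ hcfg {X (k - 1), X k} ((Set.finite_singleton _).insert _) ?_
    intro x hx hxs
    simp only [Set.mem_insert_iff, Set.mem_singleton_iff, not_or] at hxs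
    exact (hchar x).mpr (Or.inl ⟨hx, hxs.1, hxs.2⟩)
  have hY : StrictMono (Y2 X k i) := by
    apply strictMono_int_of_lt_succ
    intro n
    simp only [Y2]
    rcases lt_trichotomy n (k - 1) with h | h | h
    · rw [if_pos h]
      rcases eq_or_lt_of_le (show n + 1 ≤ k - 1 by omega) with h' | h'
      · rw [if_neg (show ¬ n + 1 < k - 1 by omega), if_pos h']
        have := hX.1 (show n < k - 1 by omega)
        omega
      · rw [if_pos h']
        exact hX.1 (by omega)
    · rw [if_neg (show ¬ n < k - 1 by omega), if_pos h,
        if_neg (show ¬ n + 1 < k - 1 by omega), if_neg (show ¬ n + 1 = k - 1 by omega)]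
      have := hX.1 (show k < n + 1 + 1 by omega)
      omega
    · rw [if_neg (show ¬ n < k - 1 by omega), if_neg (show ¬ n = k - 1 by omega),
        if_neg (show ¬ n + 1 < k - 1 by omega), if_neg (show ¬ n + 1 = k - 1 by omega)]
      exact hX.1 (by omega)
  have hones : ∀ m, T i η (Y2 X k i m) = 1 := by
    intro m
    apply (hchar _).mpr
    simp only [Y2]
    split_ifs with h h'
    · exact Or.inl ⟨hX.2.1 m, hX.1.injective.ne (by omega), hX.1.injective.ne (by omega)⟩
    · exact Or.inr hp.symm
    · exact Or.inl ⟨hX.2.1 (m + 1), hX.1.injective.ne (by omega), hX.1.injective.ne (by omega)⟩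
  have hcov : ∀ j, T i η j = 1 → ∃ m, Y2 X k i m = j := by
    intro j hj
    rcases (hchar j).mp hj with ⟨hj1, hjne1, hjne2⟩ | rfl
    · obtain ⟨m, hm⟩ := hX.2.2.1 j hj1
      have hm1 : m ≠ k - 1 := fun hc => hjne1 (by rw [← hm, hc])
      have hm2 : m ≠ k := fun hc => hjne2 (by rw [← hm, hc])
      rcases lt_or_gt_of_ne hm1 with h | h
      · exact ⟨m, by simp only [Y2]; rw [if_pos h]; exact hm⟩
      · refine ⟨m - 1, ?_⟩
        simp only [Y2]
        rw [if_neg (show ¬ m - 1 < k - 1 by omega), if_neg (show ¬ m - 1 = k - 1 by omega),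
          show m - 1 + 1 = m by omega]
        exact hm
    · refine ⟨k - 1, ?_⟩
      simp only [Y2]
      split_ifs <;> omega
  have h0 : 0 ≤ Y2 X k i 0 := by
    have hx0 := hX.2.2.2.1
    simp only [Y2]
    split_ifs with h h'
    · exact hx0
    · have : X (k - 1) = X 0 := by rw [← h']
      omega
    · exact X_nonneg hX (by omega)
  have hm2' : Y2 X k i (-2) < 0 := by
    simp only [Y2]
    split_ifs with h h'
    · exact X_lt_zero hX (by omega)
    · have : X k < 0 := X_lt_zero hX (by omega)
      omega
    · exact X_lt_zero hX (by omega)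
  exact ⟨hΩ, enum_of _ _ hY hones hcov h0 hm2'⟩

lemma far {N : ℕ} {f : (ℤ → ℤ) → ℝ} (hf : IsNLocal N f) (hη : Omega1 η) (hX : IsEnum η X)
    {i : ℤ} (hi : i ≤ X (-(N : ℤ) - 2) ∨ X ((N : ℤ) + 1) < i) : f (T i η) = f η := by
  set k := kk X i with hk
  obtain ⟨hs1, hs2⟩ := kk_spec hX i
  rw [← hk] at hs1 hs2
  have hkb : k ≤ -(N : ℤ) - 2 ∨ (N : ℤ) + 2 ≤ k := by
    rcases hi with hi | hi
    · left
      have h' : X (k - 1) < X (-(N : ℤ) - 2) := by omega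
      have := hX.1.lt_iff_lt.mp h'
      omega
    · right
      have h' : X ((N : ℤ) + 1) < X k := by omega
      have := hX.1.lt_iff_lt.mp h'
      omega
  by_cases h1 : η i = 1
  · obtain ⟨hΩ, hE⟩ := caseOne hη hX h1
    rw [← hk] at hE
    refine hf _ _ _ _ hΩ hη hE hX ?_
    intro j hj1 hj2
    simp only [X1]
    rcases hkb with hkb | hkb
    · have hv : Y1 X k (-1) = X 0 := by
        simp only [Y1]
        rw [if_neg (show ¬ (-1 : ℤ) < k by omega)]
        norm_num
      rw [if_pos (show (0:ℤ) ≤ Y1 X k (-1) by rw [hv]; exact hX.2.2.2.1)]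
      simp only [Y1]
      rw [if_neg (show ¬ j + -1 < k by omega), show j + -1 + 1 = j by omega]
    · have hv : Y1 X k (-1) = X (-1) := by
        simp only [Y1]
        rw [if_pos (show (-1 : ℤ) < k by omega)]
      rw [if_neg (show ¬ (0:ℤ) ≤ Y1 X k (-1) by rw [hv]; push_neg; exact X_lt_zero hX (by omega))]
      rw [add_zero]
      simp only [Y1]
      rw [if_pos (show j < k by omega)]
  · obtain ⟨hΩ, hE⟩ := caseTwo hη hX h1
    rw [← hk] at hE
    refine hf _ _ _ _ hΩ hη hE hX ?_
    intro j hj1 hj2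
    simp only [X2]
    rcases hkb with hkb | hkb
    · have hv : Y2 X k i (-1) = X 0 := by
        simp only [Y2]
        rw [if_neg (show ¬ (-1 : ℤ) < k - 1 by omega), if_neg (show ¬ (-1 : ℤ) = k - 1 by omega)]
        norm_num
      rw [if_pos (show (0:ℤ) ≤ Y2 X k i (-1) by rw [hv]; exact hX.2.2.2.1)]
      simp only [Y2]
      rw [if_neg (show ¬ j + -1 < k - 1 by omega), if_neg (show ¬ j + -1 = k - 1 by omega),
        show j + -1 + 1 = j by omega]
    · have hv : Y2 X k i (-1) = X (-1) := by
        simp only [Y2]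
        rw [if_pos (show (-1 : ℤ) < k - 1 by omega)]
      rw [if_neg (show ¬ (0:ℤ) ≤ Y2 X k i (-1) by rw [hv]; push_neg; exact X_lt_zero hX (by omega))]
      rw [add_zero]
      simp only [Y2]
      rw [if_pos (show j < k - 1 by omega)]

end SandAux

open SandAux

/-- if `f : Ω₁ → ℝ` is `N`-local, then `L f (η) = Σ_{i∈ℤ} [f (T_i η) − f η]`
is a well-defined sum — for each `η ∈ Ω₁` only finitely many terms are nonzero — and `L f`
is an `(N+1)`-local function on `Ω₁`. -/
theorem Lgen_nLocal (N : ℕ) (f : (ℤ → ℤ) → ℝ) (hf : IsNLocal N f) :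
    (∀ η X, Omega1 η → IsEnum η X →
      (Function.support fun i : ℤ => f (T i η) - f η).Finite) ∧
    IsNLocal (N + 1) (Lgen f) := by
  constructor
  · intro η X hη hX
    apply Set.Finite.subset (Set.finite_Ioc (X (-(N : ℤ) - 2)) (X ((N : ℤ) + 1)))
    intro i hi
    simp only [Function.mem_support] at hi
    by_contra hmem
    simp only [Set.mem_Ioc, not_and_or, not_lt, not_le] at hmem
    exact hi (by rw [far hf hη hX (by tauto), sub_self])
  · intro η ζ Xη Xζ hΩη hΩζ hEη hEζ hagree
    have hwin : ∀ j : ℤ, -(N : ℤ) - 2 ≤ j → j ≤ (N : ℤ) + 1 → Xη j = Xζ j := by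
      intro j h1 h2
      exact hagree j (by push_cast; omega) (by push_cast; omega)
    have hfeq : f η = f ζ :=
      hf _ _ _ _ hΩη hΩζ hEη hEζ (fun j hj1 hj2 => hwin j (by omega) (by omega))
    unfold Lgen
    apply tsum_congr
    intro i
    rw [hfeq]
    congr 1
    by_cases hfar : i ≤ Xη (-(N : ℤ) - 2) ∨ Xη ((N : ℤ) + 1) < i
    · rw [far hf hΩη hEη hfar, far hf hΩζ hEζ ?_, hfeq]
      rcases hfar with h | h
      · left; rw [← hwin _ (le_refl _) (by omega)]; exact h
      · right; rw [← hwin _ (by omega) (le_refl _)]; exact h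
    · push_neg at hfar
      obtain ⟨hA, hB⟩ := hfar
      set k := kk Xη i with hk
      obtain ⟨hs1, hs2⟩ := kk_spec hEη i
      rw [← hk] at hs1 hs2
      have hk1 : -(N : ℤ) - 1 ≤ k := by
        have h' : Xη (-(N : ℤ) - 2) < Xη k := by omega
        have := hEη.1.lt_iff_lt.mp h'
        omega
      have hk2 : k ≤ (N : ℤ) + 1 := by
        have h' : Xη (k - 1) < Xη ((N : ℤ) + 1) := by omega
        have := hEη.1.lt_iff_lt.mp h'
        omega
      have hkζ : kk Xζ i = k :=
        kk_unique hEζ.1 (by rw [← hwin (k - 1) (by omega) (by omega)]; exact hs1)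
          (by rw [← hwin k (by omega) (by omega)]; exact hs2)
      by_cases h1 : η i = 1
      · have h1ζ : ζ i = 1 := by
          have hik : Xη k = i := eq_X_kk hEη h1
          rw [← hik, hwin k (by omega) (by omega)]
          exact hEζ.2.1 k
        obtain ⟨hΩη', hEη'⟩ := caseOne hΩη hEη h1
        obtain ⟨hΩζ', hEζ'⟩ := caseOne hΩζ hEζ h1ζ
        rw [← hk] at hEη'
        rw [hkζ] at hEζ'
        refine hf _ _ _ _ hΩη' hΩζ' hEη' hEζ' ?_
        intro j hj1 hj2
        have hYeq : ∀ m : ℤ, -(N : ℤ) - 2 ≤ m → m ≤ (N : ℤ) → Y1 Xη k m = Y1 Xζ k m := by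
          intro m hm1 hm2
          simp only [Y1]
          split_ifs with h
          · exact hwin m (by omega) (by omega)
          · exact hwin (m + 1) (by omega) (by omega)
        simp only [X1]
        rw [hYeq (-1) (by omega) (by omega)]
        set c := if 0 ≤ Y1 Xζ k (-1) then (-1 : ℤ) else 0 with hc
        have hcb : c = -1 ∨ c = 0 := by rw [hc]; split_ifs; exacts [Or.inl rfl, Or.inr rfl]
        exact hYeq (j + c) (by omega) (by omega)
      · have h1ζ : ζ i ≠ 1 := by
          intro hc
          have hik : Xζ (kk Xζ i) = i := eq_X_kk hEζ hc
          rw [hkζ, ← hwin k (by omega) (by omega)] at hik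
          exact h1 (by rw [← hik]; exact hEη.2.1 k)
        obtain ⟨hΩη', hEη'⟩ := caseTwo hΩη hEη h1
        obtain ⟨hΩζ', hEζ'⟩ := caseTwo hΩζ hEζ h1ζ
        rw [← hk] at hEη'
        rw [hkζ] at hEζ'
        refine hf _ _ _ _ hΩη' hΩζ' hEη' hEζ' ?_
        intro j hj1 hj2
        have hYeq : ∀ m : ℤ, -(N : ℤ) - 2 ≤ m → m ≤ (N : ℤ) → Y2 Xη k i m = Y2 Xζ k i m := by
          intro m hm1 hm2
          simp only [Y2]
          split_ifs with h h'
          · exact hwin m (by omega) (by omega)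
          · rw [hwin (k - 1) (by omega) (by omega), hwin k (by omega) (by omega)]
          · exact hwin (m + 1) (by omega) (by omega)
        simp only [X2]
        rw [hYeq (-1) (by omega) (by omega)]
        set c := if 0 ≤ Y2 Xζ k i (-1) then (-1 : ℤ) else 0 with hc
        have hcb : c = -1 ∨ c = 0 := by rw [hc]; split_ifs; exacts [Or.inl rfl, Or.inr rfl]
        exact hYeq (j + c) (by omega) (by omega)
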